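/- Let s: ℕ→ℕ be a monotone function and α < ε₀ an ordinal. (i) If s is strictly expansive (s(x) > x for all x), then for all x ∈ ℕ, F_{α,s}(x) ≤ F_{s,α}(s(x)). (ii) If instead s(x) ≤ x for all x, then for all x ∈ ℕ, F_{α,s}(x) ≤ F_α(x). -/

import Mathlib

open ONote Ordinal

/-- The relativized fast-growing hierarchy `F_{h,α}`, indexed by ordinal notations `< ε₀`:
`F_{h,0} = h`, `F_{h,α+1}(x) = F_{h,α}^[x+1](x)`, and `F_{h,λ}(x) = F_{h,λ(x)}(x)` for `λ` a
limit, using the standard assignment of fundamental sequences.  The (standard) fast-growing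
hierarchy `F_α` of the paper is recovered as `FGH Nat.succ`. -/
def FGH (h : ℕ → ℕ) : ONote → ℕ → ℕ
  | o =>
    match fundamentalSequence o, fundamentalSequence_has_prop o with
    | Sum.inl none, _ => h
    | Sum.inl (some a), hp =>
      have : a < o := by rw [lt_def, hp.1]; exact Order.lt_succ _
      fun i => (FGH h a)^[i + 1] i
    | Sum.inr f, hp => fun i =>
      have : f i < o := (hp.2.1 i).2.1
      FGH h (f i) i
  termination_by o => o

/-- `ω^e · k` as an ordinal notation. -/
def opowMulNat (e : ONote) : ℕ → ONote
  | 0 => 0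
  | k + 1 => ONote.oadd e k.succPNat 0

/-- The `s`-assignment of fundamental sequences, evaluated at `x`: `fseqS s x α` returns
`Sum.inl none` when `α = 0`, `Sum.inl (some β)` when `α = β + 1`, and `Sum.inr (α(x)_s)` when
`α` is a limit, where `(γ+ω^{β+1})(x)_s = γ+ω^β·s(x)` and `(γ+ω^{λ'})(x)_s = γ+ω^{λ'(x)_s}`. -/
def fseqS (s : ℕ → ℕ) (x : ℕ) : ONote → Option ONote ⊕ ONote
  | ONote.zero => Sum.inl none
  | ONote.oadd e n a =>
    match fseqS s x a with
    | Sum.inl (some a') => Sum.inl (some (ONote.oadd e n a'))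
    | Sum.inr b => Sum.inr (ONote.oadd e n b)
    | Sum.inl none =>
      match fseqS s x e, n.natPred with
      | Sum.inl none, 0 => Sum.inl (some 0)
      | Sum.inl none, m + 1 => Sum.inl (some (ONote.oadd 0 m.succPNat 0))
      | Sum.inl (some e'), 0 => Sum.inr (opowMulNat e' (s x))
      | Sum.inl (some e'), m + 1 => Sum.inr (ONote.oadd e m.succPNat (opowMulNat e' (s x)))
      | Sum.inr e'', 0 => Sum.inr (ONote.oadd e'' 1 0)
      | Sum.inr e'', m + 1 => Sum.inr (ONote.oadd e m.succPNat (ONote.oadd e'' 1 0))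

private lemma aux0 {E A : Ordinal} {k N : ℕ} (h : k < N) : (k : Ordinal) < ω ^ E * N + A := by
  have h1 : (k : Ordinal) < (N : Ordinal) := by exact_mod_cast h
  have h2 : (N : Ordinal) ≤ ω ^ E * N := by
    calc (N : Ordinal) = 1 * N := (one_mul _).symm
      _ ≤ ω ^ E * N := by gcongr; exact Order.one_le_iff_pos.2 (opow_pos E omega0_pos)
  exact lt_of_lt_of_le (h1.trans_le h2) le_self_add

private lemma aux1 {E A R : Ordinal} {N : ℕ} (hN : 1 ≤ N) (hR : R < ω ^ E) :
    R < ω ^ E * N + A := by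
  have h2 : ω ^ E ≤ ω ^ E * N := by
    calc ω ^ E = ω ^ E * 1 := (mul_one _).symm
      _ ≤ ω ^ E * N := by gcongr; exact_mod_cast hN
  exact lt_of_lt_of_le (hR.trans_le h2) le_self_add

private lemma aux2 {E A R : Ordinal} {m N : ℕ} (hN : m + 2 ≤ N) (hR : R < ω ^ E) :
    ω ^ E * (↑(m + 1) : Ordinal) + R < ω ^ E * N + A := by
  have h1 : ω ^ E * (↑(m + 1) : Ordinal) + R < ω ^ E * (↑(m + 2) : Ordinal) := by
    have h0 : ω ^ E * (↑(m + 2) : Ordinal) = ω ^ E * (↑(m + 1) : Ordinal) + ω ^ E := by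
      rw [show m + 2 = (m + 1) + 1 from rfl, natCast_succ, mul_succ]
    rw [h0]
    exact (add_lt_add_iff_left _).2 hR
  have h2 : ω ^ E * (↑(m + 2) : Ordinal) ≤ ω ^ E * N :=
    by gcongr
  exact lt_of_lt_of_le h1 (h2.trans le_self_add)

private lemma repr_opowMulNat_lt {e' e : ONote} (h : e' < e) (k : ℕ) :
    ONote.repr (opowMulNat e' k) < ω ^ ONote.repr e := by
  cases k with
  | zero => simpa [opowMulNat] using opow_pos (ONote.repr e) omega0_pos
  | succ j =>
    simp only [opowMulNat, ONote.repr, add_zero, Nat.succPNat_coe]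
    exact omega0_opow_mul_nat_lt (ONote.lt_def.1 h) (j + 1)

theorem fseqS_lt (s : ℕ → ℕ) (x : ℕ) (o : ONote) :
    (∀ a', fseqS s x o = Sum.inl (some a') → a' < o) ∧
      (∀ b, fseqS s x o = Sum.inr b → b < o) := by
  induction o with
  | zero =>
    constructor <;> intro a h <;> simp [fseqS] at h
  | oadd e n a ihe iha =>
    have hn1 : 1 ≤ (n : ℕ) := n.one_le
    have hrepr : ONote.repr (ONote.oadd e n a) = ω ^ e.repr * (n : ℕ) + a.repr := rfl
    rcases ha : fseqS s x a with (_ | a') | b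
    · rcases he : fseqS s x e with (_ | e') | e''
      · cases hn : n.natPred with
        | zero =>
          constructor <;> intro c hc <;> simp only [fseqS, ha, he, hn] at hc
          · injection hc with hc; injection hc with hc; subst hc
            exact ONote.oadd_pos e n a
          · simp at hc
        | succ m =>
          have hn' : (n : ℕ) = m + 2 := by have := PNat.natPred_add_one n; omega
          constructor <;> intro c hc <;> simp only [fseqS, ha, he, hn] at hc
          · injection hc with hc; injection hc with hc; subst hc
            rw [ONote.lt_def, hrepr]
            have h1 : ONote.repr (ONote.oadd 0 m.succPNat 0) = ((m + 1 : ℕ) : Ordinal) := by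
              show ω ^ ONote.repr 0 * (m.succPNat : ℕ) + ONote.repr 0 = _
              show ω ^ (0 : Ordinal) * (m.succPNat : ℕ) + (0 : Ordinal) = _
              rw [opow_zero, one_mul, add_zero, Nat.succPNat_coe]
            rw [h1]
            exact aux0 (by omega)
          · simp at hc
      · cases hn : n.natPred with
        | zero =>
          constructor <;> intro c hc <;> simp only [fseqS, ha, he, hn] at hc
          · simp at hc
          · injection hc with hc; subst hc
            rw [ONote.lt_def, hrepr]
            exact aux1 hn1 (repr_opowMulNat_lt (ihe.1 e' he) (s x))
        | succ m =>
          have hn' : (n : ℕ) = m + 2 := by have := PNat.natPred_add_one n; omega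
          constructor <;> intro c hc <;> simp only [fseqS, ha, he, hn] at hc
          · simp at hc
          · injection hc with hc; subst hc
            rw [ONote.lt_def, hrepr]
            have h1 : ONote.repr (ONote.oadd e m.succPNat (opowMulNat e' (s x))) =
                ω ^ e.repr * ((m + 1 : ℕ) : Ordinal) + ONote.repr (opowMulNat e' (s x)) := by
              show ω ^ e.repr * (m.succPNat : ℕ) + _ = _
              rw [Nat.succPNat_coe]
            rw [h1, hn']
            exact aux2 (le_refl _) (repr_opowMulNat_lt (ihe.1 e' he) (s x))
      · cases hn : n.natPred with
        | zero =>
          constructor <;> intro c hc <;> simp only [fseqS, ha, he, hn] at hc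
          · simp at hc
          · injection hc with hc; subst hc
            rw [ONote.lt_def, hrepr]
            exact aux1 hn1 (by simpa using ONote.lt_def.1 (ihe.2 e'' he))
        | succ m =>
          have hn' : (n : ℕ) = m + 2 := by have := PNat.natPred_add_one n; omega
          constructor <;> intro c hc <;> simp only [fseqS, ha, he, hn] at hc
          · simp at hc
          · injection hc with hc; subst hc
            rw [ONote.lt_def, hrepr]
            have h1 : ONote.repr (ONote.oadd e m.succPNat (ONote.oadd e'' 1 0)) =
                ω ^ e.repr * ((m + 1 : ℕ) : Ordinal) + ONote.repr (ONote.oadd e'' 1 0) := by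
              show ω ^ e.repr * (m.succPNat : ℕ) + _ = _
              rw [Nat.succPNat_coe]
            rw [h1, hn']
            exact aux2 (le_refl _) (by simpa using ONote.lt_def.1 (ihe.2 e'' he))
    · constructor <;> intro c hc <;> simp only [fseqS, ha] at hc
      · injection hc with hc; injection hc with hc; subst hc
        exact ONote.oadd_lt_oadd_3 (iha.1 a' ha)
      · simp at hc
    · constructor <;> intro c hc <;> simp only [fseqS, ha] at hc
      · simp at hc
      · injection hc with hc; subst hc
        exact ONote.oadd_lt_oadd_3 (iha.2 b ha)

/-- The fast-growing hierarchy `F_{α,s}` with respect to the `s`-assignment of fundamental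
sequences: `F_{0,s}(x) = x+1`, `F_{α+1,s}(x) = F_{α,s}^[s(x)](x)`, and
`F_{λ,s}(x) = F_{λ(x)_s,s}(x)` for `λ` a limit. -/
def FGHs (s : ℕ → ℕ) : ONote → ℕ → ℕ
  | o => fun x =>
    match hfs : fseqS s x o with
    | Sum.inl none => x + 1
    | Sum.inl (some a) =>
      have : a < o := (fseqS_lt s x o).1 a hfs
      (FGHs s a)^[s x] x
    | Sum.inr b =>
      have : b < o := (fseqS_lt s x o).2 b hfs
      FGHs s b x
  termination_by o => o

-- test equation lemmas
theorem FGH_def (h : ℕ → ℕ) {o : ONote} {x} (e : fundamentalSequence o = x) :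
    FGH h o =
      match (motive := (x : Option ONote ⊕ (ℕ → ONote)) → FundamentalSequenceProp o x → ℕ → ℕ)
        x, e ▸ fundamentalSequence_has_prop o with
      | Sum.inl none, _ => h
      | Sum.inl (some a), _ => fun i => (FGH h a)^[i + 1] i
      | Sum.inr f, _ => fun i => FGH h (f i) i := by
  subst x; rw [FGH]

theorem FGH_none (h : ℕ → ℕ) {o : ONote} (e : fundamentalSequence o = Sum.inl none) :
    FGH h o = h := by rw [FGH_def h e]

theorem FGH_some (h : ℕ → ℕ) {o a : ONote} (e : fundamentalSequence o = Sum.inl (some a)) :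
    FGH h o = fun i => (FGH h a)^[i + 1] i := by rw [FGH_def h e]

theorem FGH_limit (h : ℕ → ℕ) {o : ONote} {f} (e : fundamentalSequence o = Sum.inr f) :
    FGH h o = fun i => FGH h (f i) i := by rw [FGH_def h e]

theorem FGHs_none {s : ℕ → ℕ} {x : ℕ} {o : ONote} (h : fseqS s x o = Sum.inl none) :
    FGHs s o x = x + 1 := by
  rw [FGHs]; beta_reduce; split <;> simp_all

theorem FGHs_some {s : ℕ → ℕ} {x : ℕ} {o a : ONote} (h : fseqS s x o = Sum.inl (some a)) :
    FGHs s o x = (FGHs s a)^[s x] x := by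
  rw [FGHs]; beta_reduce; split <;> simp_all

theorem FGHs_limit {s : ℕ → ℕ} {x : ℕ} {o b : ONote} (h : fseqS s x o = Sum.inr b) :
    FGHs s o x = FGHs s b x := by
  rw [FGHs]; beta_reduce; split <;> simp_all
/-- One descending step at argument `n`: from a successor to its predecessor, or from a limit
to the `n`-th element of its fundamental sequence. -/
def FGHStep (n : ℕ) (a b : ONote) : Prop :=
  fundamentalSequence a = Sum.inl (some b) ∨
    ∃ f, fundamentalSequence a = Sum.inr f ∧ b = f n

/-- Reachability by descending steps at argument `n`. -/
def FGHReach (n : ℕ) : ONote → ONote → Prop :=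
  Relation.ReflTransGen (fun a b => FGHStep n a b)

theorem FGHStep.lt {n : ℕ} {a b : ONote} (h : FGHStep n a b) : b < a := by
  have hp := fundamentalSequence_has_prop a
  rcases h with h | ⟨f, h, rfl⟩
  · rw [h] at hp; rw [ONote.lt_def, hp.1]; exact Order.lt_succ _
  · rw [h] at hp; exact (hp.2.1 n).2.1

theorem fundseq_none_iff {o : ONote} : fundamentalSequence o = Sum.inl none ↔ o = 0 := by
  constructor
  · intro h; have hp := fundamentalSequence_has_prop o; rwa [h] at hp
  · rintro rfl; rfl

theorem fseqS_none_iff {s : ℕ → ℕ} {x : ℕ} {o : ONote} :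
    fseqS s x o = Sum.inl none ↔ o = 0 := by
  constructor
  · intro h
    cases o with
    | zero => rfl
    | oadd e c a =>
      exfalso
      rcases ha : fseqS s x a with (_ | a') | b <;>
        rcases he : fseqS s x e with (_ | e') | e'' <;>
        rcases hn : c.natPred with _ | m <;>
        simp [fseqS, ha, he, hn] at h
  · rintro rfl; rfl

theorem FGHReach.trans {n : ℕ} {a b c : ONote} (h1 : FGHReach n a b) (h2 : FGHReach n b c) :
    FGHReach n a c := Relation.ReflTransGen.trans h1 h2

/-- Lifting reach through a common "tail position". -/
theorem FGHReach.oadd_lift {n : ℕ} {a b : ONote} (e : ONote) (c : ℕ+)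
    (h : FGHReach n a b) : FGHReach n (ONote.oadd e c a) (ONote.oadd e c b) := by
  refine Relation.ReflTransGen.lift (fun t => ONote.oadd e c t) (fun p q hpq => ?_) _ _ h
  rcases hpq with hp | ⟨f, hp, rfl⟩
  · left; simp only [fundamentalSequence, hp]
  · right; exact ⟨fun i => ONote.oadd e c (f i), by simp only [fundamentalSequence, hp], rfl⟩

/-- Everything reaches `0`. -/
theorem FGHReach.to_zero (n : ℕ) (o : ONote) : FGHReach n o 0 := by
  induction o using WellFounded.induction (hwf := InvImage.wf ONote.repr Ordinal.lt_wf) with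
  | _ o IH =>
  rcases e : fundamentalSequence o with (_ | a) | f
  · rw [fundseq_none_iff.1 e]; exact Relation.ReflTransGen.refl
  · have ha : a < o := FGHStep.lt (n := n) (Or.inl e)
    exact Relation.ReflTransGen.head (Or.inl e) (IH a ha)
  · have ha : f n < o := FGHStep.lt (Or.inr ⟨f, e, rfl⟩)
    exact Relation.ReflTransGen.head (Or.inr ⟨f, e, rfl⟩) (IH (f n) ha)
theorem reach_opowMulNat_succ (e : ONote) (k n : ℕ) :
    FGHReach n (opowMulNat e (k + 1)) (opowMulNat e k) := by
  cases k with
  | zero => exact FGHReach.to_zero n _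
  | succ k =>
    show FGHReach n (ONote.oadd e (k+1).succPNat 0) (ONote.oadd e k.succPNat 0)
    rcases he : fundamentalSequence e with (_ | e') | g
    · rw [fundseq_none_iff.1 he]
      have hfo : fundamentalSequence (ONote.oadd 0 (k+1).succPNat 0) =
          Sum.inl (some (ONote.oadd 0 k.succPNat 0)) := by
        simp only [fundamentalSequence, Nat.natPred_succPNat]; rfl
      exact Relation.ReflTransGen.single (Or.inl hfo)
    · have hfo : fundamentalSequence (ONote.oadd e (k+1).succPNat 0) =
          Sum.inr (fun i => ONote.oadd e k.succPNat (ONote.oadd e' i.succPNat 0)) := by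
        simp only [fundamentalSequence, he, Nat.natPred_succPNat]; rfl
      refine Relation.ReflTransGen.head (Or.inr ⟨_, hfo, rfl⟩) ?_
      exact FGHReach.oadd_lift e k.succPNat (FGHReach.to_zero n _)
    · have hfo : fundamentalSequence (ONote.oadd e (k+1).succPNat 0) =
          Sum.inr (fun i => ONote.oadd e k.succPNat (ONote.oadd (g i) 1 0)) := by
        simp only [fundamentalSequence, he, Nat.natPred_succPNat]; rfl
      refine Relation.ReflTransGen.head (Or.inr ⟨_, hfo, rfl⟩) ?_
      exact FGHReach.oadd_lift e k.succPNat (FGHReach.to_zero n _)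

theorem reach_opowMulNat (e : ONote) {j k n : ℕ} (h : j ≤ k) :
    FGHReach n (opowMulNat e k) (opowMulNat e j) := by
  induction h with
  | refl => exact Relation.ReflTransGen.refl
  | step h IH => exact (reach_opowMulNat_succ e _ n).trans IH

theorem FGHReach.omega_lift {n : ℕ} {a b : ONote} (h : FGHReach n a b) :
    FGHReach n (ONote.oadd a 1 0) (ONote.oadd b 1 0) := by
  refine Relation.ReflTransGen.lift' (fun t => ONote.oadd t 1 0) (fun p q hpq => ?_) _ _ h
  rcases hpq with hp | ⟨f, hp, rfl⟩
  · have hfo : fundamentalSequence (ONote.oadd p 1 0) =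
        Sum.inr (fun i => ONote.oadd q i.succPNat 0) := by
      simp only [fundamentalSequence, hp]; rfl
    refine Relation.ReflTransGen.head (Or.inr ⟨_, hfo, rfl⟩) ?_
    exact reach_opowMulNat q (n := n) (j := 1) (k := n + 1) (by omega)
  · have hfo : fundamentalSequence (ONote.oadd p 1 0) =
        Sum.inr (fun i => ONote.oadd (f i) 1 0) := by
      simp only [fundamentalSequence, hp]; rfl
    exact Relation.ReflTransGen.single (Or.inr ⟨_, hfo, rfl⟩)
theorem fseqS_fundseq_corr (s : ℕ → ℕ) (x : ℕ) (o : ONote) :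
    (fseqS s x o = Sum.inl none ∧ fundamentalSequence o = Sum.inl none) ∨
      (∃ a', fseqS s x o = Sum.inl (some a') ∧ fundamentalSequence o = Sum.inl (some a')) ∨
      (∃ b g, fseqS s x o = Sum.inr b ∧ fundamentalSequence o = Sum.inr g) := by
  induction o with
  | zero => exact Or.inl ⟨rfl, rfl⟩
  | oadd e c a ihe iha =>
    rcases iha with ⟨ha1, ha2⟩ | ⟨a', ha1, ha2⟩ | ⟨b, g, ha1, ha2⟩
    · rcases ihe with ⟨he1, he2⟩ | ⟨e', he1, he2⟩ | ⟨b', g', he1, he2⟩ <;>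
        rcases hn : c.natPred with _ | m
      · exact Or.inr (Or.inl ⟨0, by simp only [fseqS, ha1, he1, hn]; try rfl,
          by simp only [fundamentalSequence, ha2, he2, hn]; try rfl⟩)
      · exact Or.inr (Or.inl ⟨ONote.oadd 0 m.succPNat 0,
          by simp only [fseqS, ha1, he1, hn]; try rfl,
          by simp only [fundamentalSequence, ha2, he2, hn]; try rfl⟩)
      · exact Or.inr (Or.inr ⟨opowMulNat e' (s x), fun i => ONote.oadd e' i.succPNat 0,
          by simp only [fseqS, ha1, he1, hn]; try rfl,
          by simp only [fundamentalSequence, ha2, he2, hn]; try rfl⟩)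
      · exact Or.inr (Or.inr ⟨ONote.oadd e m.succPNat (opowMulNat e' (s x)),
          fun i => ONote.oadd e m.succPNat (ONote.oadd e' i.succPNat 0),
          by simp only [fseqS, ha1, he1, hn]; try rfl,
          by simp only [fundamentalSequence, ha2, he2, hn]; try rfl⟩)
      · exact Or.inr (Or.inr ⟨ONote.oadd b' 1 0, fun i => ONote.oadd (g' i) 1 0,
          by simp only [fseqS, ha1, he1, hn]; try rfl,
          by simp only [fundamentalSequence, ha2, he2, hn]; try rfl⟩)
      · exact Or.inr (Or.inr ⟨ONote.oadd e m.succPNat (ONote.oadd b' 1 0),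
          fun i => ONote.oadd e m.succPNat (ONote.oadd (g' i) 1 0),
          by simp only [fseqS, ha1, he1, hn]; try rfl,
          by simp only [fundamentalSequence, ha2, he2, hn]; try rfl⟩)
    · exact Or.inr (Or.inl ⟨ONote.oadd e c a', by simp only [fseqS, ha1],
        by simp only [fundamentalSequence, ha2]⟩)
    · exact Or.inr (Or.inr ⟨ONote.oadd e c b, fun i => ONote.oadd e c (g i),
        by simp only [fseqS, ha1], by simp only [fundamentalSequence, ha2]⟩)

theorem fundseq_some_of_fseqS {s : ℕ → ℕ} {x : ℕ} {o a : ONote}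
    (h : fseqS s x o = Sum.inl (some a)) : fundamentalSequence o = Sum.inl (some a) := by
  rcases fseqS_fundseq_corr s x o with ⟨h1, _⟩ | ⟨a', h1, h2⟩ | ⟨b, g, h1, _⟩ <;>
    rw [h] at h1
  · cases h1
  · obtain rfl : a' = a := by injection h1 with h1; injection h1 with h1; exact h1.symm
    exact h2
  · cases h1

theorem fseqS_some_of_fundseq {s : ℕ → ℕ} {x : ℕ} {o a : ONote}
    (h : fundamentalSequence o = Sum.inl (some a)) : fseqS s x o = Sum.inl (some a) := by
  rcases fseqS_fundseq_corr s x o with ⟨_, h2⟩ | ⟨a', h1, h2⟩ | ⟨b, g, _, h2⟩ <;>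
    rw [h] at h2
  · cases h2
  · obtain rfl : a' = a := by injection h2 with h2; injection h2 with h2; exact h2.symm
    exact h1
  · cases h2

theorem fundseq_inr_of_fseqS {s : ℕ → ℕ} {x : ℕ} {o b : ONote}
    (h : fseqS s x o = Sum.inr b) : ∃ g, fundamentalSequence o = Sum.inr g := by
  rcases fseqS_fundseq_corr s x o with ⟨h1, _⟩ | ⟨a', h1, _⟩ | ⟨b', g, h1, h2⟩ <;>
    rw [h] at h1
  · cases h1
  · cases h1
  · exact ⟨g, h2⟩

theorem fseqS_inr_of_fundseq {s : ℕ → ℕ} {x : ℕ} {o : ONote} {f : ℕ → ONote}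
    (h : fundamentalSequence o = Sum.inr f) : ∃ b, fseqS s x o = Sum.inr b := by
  rcases fseqS_fundseq_corr s x o with ⟨_, h2⟩ | ⟨a', _, h2⟩ | ⟨b', g, h1, h2⟩ <;>
    rw [h] at h2
  · cases h2
  · cases h2
  · exact ⟨b', h1⟩

/-- The standard fundamental sequence value `f x` is computed by `fseqS` with the constant
function `x+1`. -/
theorem fseqS_const_eq_fundseq (x : ℕ) : ∀ {o : ONote} {f : ℕ → ONote},
    fundamentalSequence o = Sum.inr f → fseqS (fun _ => x + 1) 0 o = Sum.inr (f x) := by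
  intro o
  induction o with
  | zero => intro f h; cases h
  | oadd e c a ihe iha =>
    intro f h
    rcases ha : fundamentalSequence a with (_ | a') | fa
    · obtain rfl : a = 0 := fundseq_none_iff.1 ha
      rcases he : fundamentalSequence e with (_ | e') | g <;> rcases hn : c.natPred with _ | m <;>
        simp only [fundamentalSequence, ha, he, hn] at h
      · cases h
      · cases h
      · obtain rfl : f = fun i => ONote.oadd e' i.succPNat 0 := by injection h with h; exact h.symm
        have h1 : fseqS (fun _ => x + 1) 0 e = Sum.inl (some e') := fseqS_some_of_fundseq he
        simp only [fseqS, h1, hn]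
        rfl
      · obtain rfl : f = fun i => ONote.oadd e m.succPNat (ONote.oadd e' i.succPNat 0) := by injection h with h; exact h.symm
        have h1 : fseqS (fun _ => x + 1) 0 e = Sum.inl (some e') := fseqS_some_of_fundseq he
        simp only [fseqS, h1, hn]
        rfl
      · obtain rfl : f = fun i => ONote.oadd (g i) 1 0 := by injection h with h; exact h.symm
        have h1 : fseqS (fun _ => x + 1) 0 e = Sum.inr (g x) := ihe he
        simp only [fseqS, h1, hn]
      · obtain rfl : f = fun i => ONote.oadd e m.succPNat (ONote.oadd (g i) 1 0) := by injection h with h; exact h.symm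
        have h1 : fseqS (fun _ => x + 1) 0 e = Sum.inr (g x) := ihe he
        simp only [fseqS, h1, hn]
    · simp only [fundamentalSequence, ha] at h; cases h
    · simp only [fundamentalSequence, ha] at h
      obtain rfl : f = fun i => ONote.oadd e c (fa i) := by injection h with h; exact h.symm
      have h1 : fseqS (fun _ => x + 1) 0 a = Sum.inr (fa x) := iha ha
      simp only [fseqS, h1]
theorem onote_lt_irrefl {a : ONote} : ¬ a < a := by
  rw [ONote.lt_def]; exact lt_irrefl _

/-- The `s`-assignment value at a limit is reachable by descending steps at any argument `n`
with `s x ≤ n + 1`. -/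
theorem fseqS_reach (s : ℕ → ℕ) (x : ℕ) : ∀ (o b : ONote), fseqS s x o = Sum.inr b →
    ∀ n : ℕ, s x ≤ n + 1 → FGHReach n o b := by
  intro o
  induction o with
  | zero => intro b h; cases h
  | oadd e c a ihe iha =>
    intro b h n hsn
    rcases ha : fseqS s x a with (_ | a') | b0
    · obtain rfl : a = 0 := fseqS_none_iff.1 ha
      rcases he : fseqS s x e with (_ | e') | e'' <;> rcases hn : c.natPred with _ | m <;>
        simp only [fseqS, ha, he, hn] at h
      · cases h
      · cases h
      · -- o = ω^e, e = e'+1 : b = ω^{e'}·(s x)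
        obtain rfl : b = opowMulNat e' (s x) := by injection h with h; exact h.symm
        have hfe : fundamentalSequence e = Sum.inl (some e') := fundseq_some_of_fseqS he
        have hfo : fundamentalSequence (ONote.oadd e c 0) =
            Sum.inr (fun i => ONote.oadd e' i.succPNat 0) := by
          simp only [fundamentalSequence, hfe, hn]; rfl
        refine Relation.ReflTransGen.head (Or.inr ⟨_, hfo, rfl⟩) ?_
        exact reach_opowMulNat e' (j := s x) (k := n + 1) hsn
      · obtain rfl : b = ONote.oadd e m.succPNat (opowMulNat e' (s x)) := by
          injection h with h; exact h.symm
        have hfe : fundamentalSequence e = Sum.inl (some e') := fundseq_some_of_fseqS he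
        have hfo : fundamentalSequence (ONote.oadd e c 0) =
            Sum.inr (fun i => ONote.oadd e m.succPNat (ONote.oadd e' i.succPNat 0)) := by
          simp only [fundamentalSequence, hfe, hn]; rfl
        refine Relation.ReflTransGen.head (Or.inr ⟨_, hfo, rfl⟩) ?_
        exact FGHReach.oadd_lift e m.succPNat (reach_opowMulNat e' (j := s x) (k := n + 1) hsn)
      · -- o = ω^e, e limit
        obtain rfl : b = ONote.oadd e'' 1 0 := by injection h with h; exact h.symm
        obtain rfl : c = 1 := by
          have := PNat.natPred_add_one c; rw [hn] at this
          exact PNat.coe_inj.1 this.symm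
        exact (ihe e'' he n hsn).omega_lift
      · obtain rfl : b = ONote.oadd e m.succPNat (ONote.oadd e'' 1 0) := by
          injection h with h; exact h.symm
        obtain ⟨g, hfe⟩ := fundseq_inr_of_fseqS he
        have hfo : fundamentalSequence (ONote.oadd e c 0) =
            Sum.inr (fun i => ONote.oadd e m.succPNat (ONote.oadd (g i) 1 0)) := by
          simp only [fundamentalSequence, hfe, hn]; rfl
        refine Relation.ReflTransGen.head (Or.inr ⟨_, hfo, rfl⟩) ?_
        refine FGHReach.oadd_lift e m.succPNat ?_
        have hlt : e'' < e := (fseqS_lt s x e).2 e'' he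
        rcases (ihe e'' he n hsn).cases_head with rfl | ⟨c', hst, hrest⟩
        · exact absurd hlt onote_lt_irrefl
        · rcases hst with hsome | ⟨g2, hg2, rfl⟩
          · rw [hfe] at hsome; cases hsome
          · rw [hfe] at hg2
            obtain rfl : g2 = g := by injection hg2 with hg2; exact hg2.symm
            exact FGHReach.omega_lift hrest
    · simp only [fseqS, ha] at h; cases h
    · simp only [fseqS, ha] at h
      obtain rfl : b = ONote.oadd e c b0 := by injection h with h; exact h.symm
      exact FGHReach.oadd_lift e c (iha b0 ha n hsn)
private lemma iter_le {F : ℕ → ℕ} (hF : ∀ y, y < F y) (k x : ℕ) : x ≤ F^[k] x := by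
  induction k with
  | zero => rfl
  | succ k IH => rw [Function.iterate_succ_apply']; exact IH.trans (hF _).le

private lemma iter_le_iter {F : ℕ → ℕ} (hF : ∀ y, y < F y) {k l : ℕ} (h : k ≤ l) (x : ℕ) :
    F^[k] x ≤ F^[l] x := by
  obtain ⟨m, rfl⟩ : ∃ m, l = m + k := ⟨l - k, by omega⟩
  rw [Function.iterate_add_apply]
  exact iter_le hF m _

theorem FGH_exp (h : ℕ → ℕ) (hb : ∀ y, y < h y) : ∀ (o : ONote) (x : ℕ), x < FGH h o x := by
  intro o
  induction o using WellFounded.induction (hwf := InvImage.wf ONote.repr Ordinal.lt_wf) with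
  | _ o IH =>
  intro x
  rcases e : fundamentalSequence o with (_ | a) | f
  · rw [FGH_none h e]; exact hb x
  · have ha : a < o := FGHStep.lt (n := 0) (Or.inl e)
    rw [FGH_some h e]
    calc x < FGH h a x := IH a ha x
      _ = (FGH h a)^[1] x := rfl
      _ ≤ (FGH h a)^[x + 1] x := iter_le_iter (IH a ha) (by omega) x
  · have ha : f x < o := FGHStep.lt (Or.inr ⟨f, e, rfl⟩)
    rw [FGH_limit h e]
    exact IH (f x) ha x

theorem FGH_step_le (h : ℕ → ℕ) (hb : ∀ y, y < h y) {n : ℕ} {o b : ONote}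
    (hs : FGHStep n o b) : FGH h b n ≤ FGH h o n := by
  rcases hs with e | ⟨f, e, rfl⟩
  · rw [FGH_some h e]
    calc FGH h b n = (FGH h b)^[1] n := rfl
      _ ≤ (FGH h b)^[n + 1] n := iter_le_iter (FGH_exp h hb b) (by omega) n
  · rw [FGH_limit h e]

theorem FGH_reach_le (h : ℕ → ℕ) (hb : ∀ y, y < h y) {n : ℕ} {o b : ONote}
    (hr : FGHReach n o b) : FGH h b n ≤ FGH h o n := by
  induction hr with
  | refl => exact le_rfl
  | tail _ hst IH => exact (FGH_step_le h hb hst).trans IH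

theorem FGH_mono (h : ℕ → ℕ) (hb : ∀ y, y < h y) (hm : Monotone h) :
    ∀ o : ONote, Monotone (FGH h o) := by
  intro o
  induction o using WellFounded.induction (hwf := InvImage.wf ONote.repr Ordinal.lt_wf) with
  | _ o IH =>
  intro x y hxy
  rcases e : fundamentalSequence o with (_ | a) | f
  · rw [FGH_none h e]; exact hm hxy
  · have ha : a < o := FGHStep.lt (n := 0) (Or.inl e)
    rw [FGH_some h e]
    calc (FGH h a)^[x + 1] x ≤ (FGH h a)^[x + 1] y := (IH a ha).iterate _ hxy
      _ ≤ (FGH h a)^[y + 1] y := iter_le_iter (FGH_exp h hb a) (by omega) y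
  · rw [FGH_limit h e]
    have h1 : FGH h (f x) x ≤ FGH h (f x) y := IH (f x) (FGHStep.lt (Or.inr ⟨f, e, rfl⟩)) hxy
    refine h1.trans ?_
    have h2 : fseqS (fun _ => x + 1) 0 o = Sum.inr (f x) := fseqS_const_eq_fundseq x e
    have h3 : FGH h (f x) y ≤ FGH h o y :=
      FGH_reach_le h hb (fseqS_reach _ 0 o (f x) h2 y (by omega))
    rwa [FGH_limit h e] at h3
theorem FGHs_le_FGH_of_exp (s : ℕ → ℕ) (hm : Monotone s) (he : ∀ y, y < s y) :
    ∀ (o : ONote) (x : ℕ), s (FGHs s o x) ≤ FGH s o (s x) := by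
  intro o
  induction o using WellFounded.induction (hwf := InvImage.wf ONote.repr Ordinal.lt_wf) with
  | _ o IH =>
  intro x
  rcases e : fundamentalSequence o with (_ | a) | f
  · have h0 : fseqS s x o = Sum.inl none := by rw [fundseq_none_iff.1 e]; rfl
    rw [FGH_none s e, FGHs_none h0]
    exact hm (he x)
  · have ha : a < o := FGHStep.lt (n := 0) (Or.inl e)
    rw [FGH_some s e, FGHs_some (fseqS_some_of_fundseq e)]
    have key : ∀ k, s ((FGHs s a)^[k] x) ≤ (FGH s a)^[k] (s x) := by
      intro k
      induction k with
      | zero => exact le_rfl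
      | succ k IHk =>
        rw [Function.iterate_succ_apply', Function.iterate_succ_apply']
        calc s (FGHs s a ((FGHs s a)^[k] x)) ≤ FGH s a (s ((FGHs s a)^[k] x)) := IH a ha _
          _ ≤ FGH s a ((FGH s a)^[k] (s x)) := FGH_mono s he hm a IHk
    calc s ((FGHs s a)^[s x] x) ≤ (FGH s a)^[s x] (s x) := key (s x)
      _ ≤ (FGH s a)^[s x + 1] (s x) := iter_le_iter (FGH_exp s he a) (by omega) _
  · obtain ⟨b, hb⟩ := fseqS_inr_of_fundseq (s := s) (x := x) e
    rw [FGHs_limit hb]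
    have hblt : b < o := (fseqS_lt s x o).2 b hb
    refine (IH b hblt x).trans ?_
    exact FGH_reach_le s he (fseqS_reach s x o b hb (s x) (by omega))

theorem FGHs_le_FGH_of_le (s : ℕ → ℕ) (hs : ∀ y, s y ≤ y) :
    ∀ (o : ONote) (x : ℕ), FGHs s o x ≤ FGH Nat.succ o x := by
  have hev : ∀ y, y < Nat.succ y := Nat.lt_succ_self
  have hmv : Monotone Nat.succ := fun a b h => Nat.succ_le_succ h
  intro o
  induction o using WellFounded.induction (hwf := InvImage.wf ONote.repr Ordinal.lt_wf) with
  | _ o IH =>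
  intro x
  rcases e : fundamentalSequence o with (_ | a) | f
  · have h0 : fseqS s x o = Sum.inl none := by rw [fundseq_none_iff.1 e]; rfl
    rw [FGH_none Nat.succ e, FGHs_none h0]
  · have ha : a < o := FGHStep.lt (n := 0) (Or.inl e)
    rw [FGH_some Nat.succ e, FGHs_some (fseqS_some_of_fundseq e)]
    have key : ∀ k, (FGHs s a)^[k] x ≤ (FGH Nat.succ a)^[k] x := by
      intro k
      induction k with
      | zero => exact le_rfl
      | succ k IHk =>
        rw [Function.iterate_succ_apply', Function.iterate_succ_apply']
        calc FGHs s a ((FGHs s a)^[k] x) ≤ FGH Nat.succ a ((FGHs s a)^[k] x) := IH a ha _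
          _ ≤ FGH Nat.succ a ((FGH Nat.succ a)^[k] x) := FGH_mono Nat.succ hev hmv a IHk
    calc (FGHs s a)^[s x] x ≤ (FGH Nat.succ a)^[s x] x := key (s x)
      _ ≤ (FGH Nat.succ a)^[x + 1] x :=
        iter_le_iter (FGH_exp Nat.succ hev a) (by have := hs x; omega) _
  · obtain ⟨b, hb⟩ := fseqS_inr_of_fundseq (s := s) (x := x) e
    rw [FGHs_limit hb]
    have hblt : b < o := (fseqS_lt s x o).2 b hb
    refine (IH b hblt x).trans ?_
    exact FGH_reach_le Nat.succ hev (fseqS_reach s x o b hb x (by have := hs x; omega))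

/-- Let `s : ℕ → ℕ` be a monotone function and `α < ε₀`.  (i) If `s` is strictly expansive
(`s(x) > x` for all `x`), then `F_{α,s}(x) ≤ F_{s,α}(s(x))` for all `x`.  (ii) If instead
`s(x) ≤ x` for all `x`, then `F_{α,s}(x) ≤ F_α(x)` for all `x`. -/
theorem fastGrowing_nonstandard_fundamental_seqs (s : ℕ → ℕ) (hmono : Monotone s)
    (α : ONote) (hNF : α.NF) :
    ((∀ x, x < s x) → ∀ x, FGHs s α x ≤ FGH s α (s x)) ∧
      ((∀ x, s x ≤ x) → ∀ x, FGHs s α x ≤ FGH Nat.succ α x) := by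
  constructor
  · intro hexp x
    exact (hexp _).le.trans (FGHs_le_FGH_of_exp s hmono hexp α x)
  · intro hle x
    exact FGHs_le_FGH_of_le s hle α x
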